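/- Let G be a regular graph with degree D and suppose every edge x~y has Ollivier Ricci curvature κ(x,y) ≥ K > 0. Then diam(G) ≤ 2/K. -/

import Mathlib

open Finset

namespace BMS

open scoped Classical

variable {V : Type*}

/-- The uniform probability measure on the closed 1-ball of `x` in a `D`-regular graph. -/
noncomputable def mu (G : SimpleGraph V) (D : ℕ) (x : V) : V → ℝ :=
  fun v => if G.dist x v ≤ 1 then 1 / (D + 1) else 0

/-- The L¹-Wasserstein distance between `μ_x` and `μ_y`, as an infimum over transport plans. -/
noncomputable def W1 (G : SimpleGraph V) [Fintype V] (D : ℕ) (x y : V) : ℝ :=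
  sInf { c : ℝ | ∃ π : V → V → ℝ,
    (∀ u v, 0 ≤ π u v) ∧
    (∀ u, ∑ v, π u v = mu G D x u) ∧
    (∀ v, ∑ u, π u v = mu G D y v) ∧
    c = ∑ u, ∑ v, (G.dist u v : ℝ) * π u v }

/-- Ollivier Ricci curvature (Lin–Lu–Yau normalization for regular graphs). -/
noncomputable def kappa (G : SimpleGraph V) [Fintype V] (D : ℕ) (x y : V) : ℝ :=
  ((D + 1) / D) * (1 - W1 G D x y)

/-- `G` is Bonnet–Myers sharp: the infimum of the curvature over edges equals `2 / L`. -/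
def BMSharp (G : SimpleGraph V) [Fintype V] (D L : ℕ) : Prop :=
  sInf { k : ℝ | ∃ x y, G.Adj x y ∧ k = kappa G D x y } = 2 / (L : ℝ)

/-- Number of neighbors of `y` at distance `k` from `x0`. -/
noncomputable def sphDeg (G : SimpleGraph V) [Fintype V] (x0 y : V) (k : ℕ) : ℕ :=
  (Finset.univ.filter (fun v => G.Adj y v ∧ G.dist x0 v = k)).card

/-- Number of triangles containing the edge `x ~ y` (common neighbors of `x` and `y`). -/
noncomputable def tri (G : SimpleGraph V) [Fintype V] (x y : V) : ℕ :=
  (Finset.univ.filter (fun v => G.Adj x v ∧ G.Adj y v)).card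

/-- A good optimal transport map from `B_1(a)` to `B_1(b)`: a bijection between the 1-balls,
fixing exactly the vertices of `B_1(a) ∩ B_1(b)` (among the domain), whose cost realizes
the Wasserstein distance `W1 (μ_a, μ_b)`. -/
def goodMap (G : SimpleGraph V) [Fintype V] (D : ℕ) (a b : V) (T : V → V) : Prop :=
  Set.BijOn T {v | G.dist a v ≤ 1} {v | G.dist b v ≤ 1} ∧
  (∀ v, G.dist a v ≤ 1 → (T v = v ↔ G.dist b v ≤ 1)) ∧
  (1 / (D + 1 : ℝ)) *
      ∑ v ∈ Finset.univ.filter (fun v => G.dist a v ≤ 1), (G.dist v (T v) : ℝ) =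
    W1 G D a b

section Aux

variable [Fintype V] {G : SimpleGraph V} {D : ℕ}

/-- The set of costs of transport plans from `μ_x` to `μ_y`. -/
def planSet (G : SimpleGraph V) [Fintype V] (D : ℕ) (x y : V) : Set ℝ :=
  { c : ℝ | ∃ π : V → V → ℝ,
    (∀ u v, 0 ≤ π u v) ∧
    (∀ u, ∑ v, π u v = mu G D x u) ∧
    (∀ v, ∑ u, π u v = mu G D y v) ∧
    c = ∑ u, ∑ v, (G.dist u v : ℝ) * π u v }

lemma W1_def (x y : V) : W1 G D x y = sInf (planSet G D x y) := rfl

lemma mu_nonneg (x v : V) : 0 ≤ mu G D x v := by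
  unfold mu; split
  · positivity
  · exact le_rfl

private lemma ball_eq (hconn : G.Connected) (x : V) :
    Finset.univ.filter (fun v => G.dist x v ≤ 1) = insert x (G.neighborFinset x) := by
  ext v
  simp only [mem_filter, mem_univ, true_and, mem_insert, SimpleGraph.mem_neighborFinset]
  rw [Nat.le_one_iff_eq_zero_or_eq_one, hconn.dist_eq_zero_iff,
    SimpleGraph.dist_eq_one_iff_adj]
  constructor
  · rintro (h | h)
    · exact Or.inl h.symm
    · exact Or.inr h
  · rintro (h | h)
    · exact Or.inl h.symm
    · exact Or.inr h

private lemma card_ball (hconn : G.Connected) (hreg : G.IsRegularOfDegree D) (x : V) :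
    (Finset.univ.filter (fun v => G.dist x v ≤ 1)).card = D + 1 := by
  rw [ball_eq hconn x, Finset.card_insert_of_notMem (by simp),
    SimpleGraph.card_neighborFinset_eq_degree, hreg x]

lemma sum_mu (hconn : G.Connected) (hreg : G.IsRegularOfDegree D) (x : V) :
    ∑ v, mu G D x v = 1 := by
  unfold mu
  rw [← Finset.sum_filter, Finset.sum_const, card_ball hconn hreg x, nsmul_eq_mul]
  have : ((D : ℝ) + 1) ≠ 0 := by positivity
  push_cast
  field_simp

lemma sum_dist_mu (hconn : G.Connected) (hreg : G.IsRegularOfDegree D) (x : V) :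
    ∑ v, (G.dist x v : ℝ) * mu G D x v = D / (D + 1) := by
  unfold mu
  simp only [mul_ite, mul_zero]
  rw [← Finset.sum_filter, ball_eq hconn x,
    Finset.sum_insert (by simp)]
  have h0 : G.dist x x = 0 := SimpleGraph.dist_self
  rw [h0]
  have hnb : ∀ v ∈ G.neighborFinset x, (G.dist x v : ℝ) * (1 / (D + 1 : ℝ)) = 1 / (D + 1 : ℝ) := by
    intro v hv
    rw [SimpleGraph.mem_neighborFinset] at hv
    rw [SimpleGraph.dist_eq_one_iff_adj.mpr hv]
    norm_num
  rw [Finset.sum_congr rfl hnb, Finset.sum_const,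
    SimpleGraph.card_neighborFinset_eq_degree, hreg x, nsmul_eq_mul]
  have : ((D : ℝ) + 1) ≠ 0 := by positivity
  push_cast
  field_simp
  ring

lemma planSet_nonneg (x y : V) : ∀ c ∈ planSet G D x y, (0 : ℝ) ≤ c := by
  rintro c ⟨π, hpos, -, -, rfl⟩
  refine Finset.sum_nonneg fun u _ => Finset.sum_nonneg fun v _ => ?_
  exact mul_nonneg (Nat.cast_nonneg _) (hpos u v)

lemma planSet_bddBelow (x y : V) : BddBelow (planSet G D x y) :=
  ⟨0, planSet_nonneg x y⟩

lemma planSet_nonempty (hconn : G.Connected) (hreg : G.IsRegularOfDegree D) (x y : V) :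
    (planSet G D x y).Nonempty := by
  refine ⟨_, fun u v => mu G D x u * mu G D y v,
    fun u v => mul_nonneg (mu_nonneg x u) (mu_nonneg y v), ?_, ?_, rfl⟩
  · intro u; rw [← Finset.mul_sum, sum_mu hconn hreg, mul_one]
  · intro v; rw [← Finset.sum_mul, sum_mu hconn hreg, one_mul]

lemma W1_nonneg (hconn : G.Connected) (hreg : G.IsRegularOfDegree D) (x y : V) :
    0 ≤ W1 G D x y :=
  le_csInf (planSet_nonempty hconn hreg x y) (planSet_nonneg x y)

lemma W1_self_le (x : V) : W1 G D x x ≤ 0 := by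
  have hmem : (0 : ℝ) ∈ planSet G D x x := by
    refine ⟨fun u v => if u = v then mu G D x u else 0, ?_, ?_, ?_, ?_⟩
    · intro u v
      by_cases h : u = v
      · simp only [if_pos h]; exact mu_nonneg x u
      · simp [h]
    · intro u; simp
    · intro v; simp
    · symm
      refine Finset.sum_eq_zero fun u _ => Finset.sum_eq_zero fun v _ => ?_
      by_cases h : u = v
      · subst h; simp
      · simp [h]
  exact csInf_le (planSet_bddBelow x x) hmem

/-- Lower bound: every plan costs at least `d(x,y) - 2D/(D+1)`. -/
lemma W1_lower (hconn : G.Connected) (hreg : G.IsRegularOfDegree D) (x y : V) :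
    (G.dist x y : ℝ) - 2 * D / (D + 1) ≤ W1 G D x y := by
  refine le_csInf (planSet_nonempty hconn hreg x y) ?_
  rintro c ⟨π, hpos, hrow, hcol, rfl⟩
  have key : ∀ u v, ((G.dist x y : ℝ) - G.dist x u - G.dist v y) * π u v
      ≤ (G.dist u v : ℝ) * π u v := by
    intro u v
    refine mul_le_mul_of_nonneg_right ?_ (hpos u v)
    have h1 : G.dist x y ≤ G.dist x u + (G.dist u v + G.dist v y) :=
      (hconn.dist_triangle (v := u)).trans (Nat.add_le_add_left (hconn.dist_triangle (v := v)) _)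
    have h2 := (Nat.cast_le (α := ℝ)).mpr h1
    push_cast at h2
    linarith
  have hA : ∑ u, ∑ v, (G.dist x y : ℝ) * π u v = (G.dist x y : ℝ) := by
    have : ∑ u, ∑ v, (G.dist x y : ℝ) * π u v = (G.dist x y : ℝ) * ∑ u, ∑ v, π u v := by
      rw [Finset.mul_sum]; exact Finset.sum_congr rfl fun u _ => (Finset.mul_sum _ _ _).symm
    rw [this]
    have : ∑ u, ∑ v, π u v = 1 := by
      rw [Finset.sum_congr rfl fun u _ => hrow u, sum_mu hconn hreg]
    rw [this, mul_one]
  have hB : ∑ u, ∑ v, (G.dist x u : ℝ) * π u v = (D : ℝ) / (D + 1) := by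
    have : ∀ u, ∑ v, (G.dist x u : ℝ) * π u v = (G.dist x u : ℝ) * mu G D x u := by
      intro u; rw [← Finset.mul_sum, hrow u]
    rw [Finset.sum_congr rfl fun u _ => this u, sum_dist_mu hconn hreg]
  have hC : ∑ u, ∑ v, (G.dist v y : ℝ) * π u v = (D : ℝ) / (D + 1) := by
    rw [Finset.sum_comm]
    have : ∀ v, ∑ u, (G.dist v y : ℝ) * π u v = (G.dist y v : ℝ) * mu G D y v := by
      intro v; rw [← Finset.mul_sum, hcol v, SimpleGraph.dist_comm]
    rw [Finset.sum_congr rfl fun v _ => this v, sum_dist_mu hconn hreg]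
  have hsum : ∑ u, ∑ v, ((G.dist x y : ℝ) - G.dist x u - G.dist v y) * π u v
      ≤ ∑ u, ∑ v, (G.dist u v : ℝ) * π u v :=
    Finset.sum_le_sum fun u _ => Finset.sum_le_sum fun v _ => key u v
  have hexp : ∑ u, ∑ v, ((G.dist x y : ℝ) - G.dist x u - G.dist v y) * π u v
      = (∑ u, ∑ v, (G.dist x y : ℝ) * π u v) - (∑ u, ∑ v, (G.dist x u : ℝ) * π u v)
        - (∑ u, ∑ v, (G.dist v y : ℝ) * π u v) := by
    simp only [sub_mul, Finset.sum_sub_distrib]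
  rw [hexp, hA, hB, hC] at hsum
  calc (G.dist x y : ℝ) - 2 * D / (D + 1)
      = (G.dist x y : ℝ) - (D : ℝ) / (D + 1) - (D : ℝ) / (D + 1) := by ring
    _ ≤ ∑ u, ∑ v, (G.dist u v : ℝ) * π u v := hsum

/-- Edge bound from the curvature hypothesis. -/
lemma W1_edge {K : ℝ} (hD : 0 < D) (hk : K ≤ kappa G D x y) :
    W1 G D x y ≤ 1 - K * D / (D + 1) := by
  unfold kappa at hk
  have hD' : (0 : ℝ) < D := by exact_mod_cast hD
  have hD1 : (0 : ℝ) < (D : ℝ) + 1 := by linarith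
  have hmul := mul_le_mul_of_nonneg_right hk (le_of_lt (div_pos hD' hD1))
  have heq : ((D : ℝ) + 1) / D * (1 - W1 G D x y) * ((D : ℝ) / ((D : ℝ) + 1))
      = 1 - W1 G D x y := by
    field_simp
  rw [heq] at hmul
  have : K * ((D : ℝ) / ((D : ℝ) + 1)) = K * D / (D + 1) := by ring
  linarith [this ▸ hmul]

/-- Triangle inequality for `W1`, by gluing transport plans. -/
lemma W1_triangle (hconn : G.Connected) (hreg : G.IsRegularOfDegree D) (x y z : V) :
    W1 G D x z ≤ W1 G D x y + W1 G D y z := by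
  refine le_of_forall_pos_le_add ?_
  intro ε hε
  obtain ⟨c1, hc1mem, hc1⟩ :=
    Real.lt_sInf_add_pos (planSet_nonempty hconn hreg x y) (half_pos hε)
  obtain ⟨π1, h1pos, h1row, h1col, rfl⟩ := hc1mem
  obtain ⟨c2, hc2mem, hc2⟩ :=
    Real.lt_sInf_add_pos (planSet_nonempty hconn hreg y z) (half_pos hε)
  obtain ⟨π2, h2pos, h2row, h2col, rfl⟩ := hc2mem
  set g : V → V → V → ℝ :=
    fun u v w => if mu G D y v = 0 then 0 else π1 u v * π2 v w / mu G D y v with hg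
  have hz1 : ∀ u v, mu G D y v = 0 → π1 u v = 0 := by
    intro u v hv
    have hs : ∑ u, π1 u v = 0 := (h1col v).trans hv
    exact (Finset.sum_eq_zero_iff_of_nonneg fun i _ => h1pos i v).mp hs u (Finset.mem_univ u)
  have hz2 : ∀ v w, mu G D y v = 0 → π2 v w = 0 := by
    intro v w hv
    have hs : ∑ w, π2 v w = 0 := (h2row v).trans hv
    exact (Finset.sum_eq_zero_iff_of_nonneg fun i _ => h2pos v i).mp hs w (Finset.mem_univ w)
  have hgnn : ∀ u v w, 0 ≤ g u v w := by
    intro u v w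
    rw [hg]
    dsimp only
    split
    · exact le_refl 0
    · exact div_nonneg (mul_nonneg (h1pos u v) (h2pos v w)) (mu_nonneg y v)
  have hgw : ∀ u v, ∑ w, g u v w = π1 u v := by
    intro u v
    by_cases hv : mu G D y v = 0
    · simp [hg, hv, hz1 u v hv]
    · simp only [hg, if_neg hv]
      rw [← Finset.sum_div, ← Finset.mul_sum, h2row, mul_div_assoc, div_self hv, mul_one]
  have hgu : ∀ v w, ∑ u, g u v w = π2 v w := by
    intro v w
    by_cases hv : mu G D y v = 0
    · simp [hg, hv, hz2 v w hv]
    · simp only [hg, if_neg hv]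
      rw [← Finset.sum_div, ← Finset.sum_mul, h1col, mul_comm, mul_div_assoc, div_self hv,
        mul_one]
  set π : V → V → ℝ := fun u w => ∑ v, g u v w with hπ
  have hmem : (∑ u, ∑ w, (G.dist u w : ℝ) * π u w) ∈ planSet G D x z := by
    refine ⟨π, ?_, ?_, ?_, rfl⟩
    · intro u w; exact Finset.sum_nonneg fun v _ => hgnn u v w
    · intro u
      rw [hπ]
      dsimp only
      rw [Finset.sum_comm]
      rw [Finset.sum_congr rfl fun v _ => hgw u v, h1row u]
    · intro w
      rw [hπ]
      dsimp only
      rw [Finset.sum_comm]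
      rw [Finset.sum_congr rfl fun v _ => hgu v w, h2col w]
  have hcost : ∑ u, ∑ w, (G.dist u w : ℝ) * π u w
      ≤ (∑ u, ∑ v, (G.dist u v : ℝ) * π1 u v) + (∑ v, ∑ w, (G.dist v w : ℝ) * π2 v w) := by
    have step1 : ∑ u, ∑ w, (G.dist u w : ℝ) * π u w
        ≤ ∑ u, ∑ w, ∑ v, ((G.dist u v : ℝ) + (G.dist v w : ℝ)) * g u v w := by
      refine Finset.sum_le_sum fun u _ => Finset.sum_le_sum fun w _ => ?_
      rw [hπ]
      dsimp only
      rw [Finset.mul_sum]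
      refine Finset.sum_le_sum fun v _ => ?_
      refine mul_le_mul_of_nonneg_right ?_ (hgnn u v w)
      have h1 : G.dist u w ≤ G.dist u v + G.dist v w := hconn.dist_triangle
      exact_mod_cast h1
    have step2 : ∑ u, ∑ w, ∑ v, ((G.dist u v : ℝ) + (G.dist v w : ℝ)) * g u v w
        = (∑ u, ∑ w, ∑ v, (G.dist u v : ℝ) * g u v w)
          + (∑ u, ∑ w, ∑ v, (G.dist v w : ℝ) * g u v w) := by
      simp only [add_mul, Finset.sum_add_distrib]
    have step3 : ∑ u, ∑ w, ∑ v, (G.dist u v : ℝ) * g u v w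
        = ∑ u, ∑ v, (G.dist u v : ℝ) * π1 u v := by
      refine Finset.sum_congr rfl fun u _ => ?_
      rw [Finset.sum_comm]
      refine Finset.sum_congr rfl fun v _ => ?_
      rw [← Finset.mul_sum, hgw u v]
    have step4 : ∑ u, ∑ w, ∑ v, (G.dist v w : ℝ) * g u v w
        = ∑ v, ∑ w, (G.dist v w : ℝ) * π2 v w := by
      have e : ∑ u, ∑ w, ∑ v, (G.dist v w : ℝ) * g u v w
          = ∑ w, ∑ v, (G.dist v w : ℝ) * π2 v w := by
        rw [Finset.sum_comm]
        refine Finset.sum_congr rfl fun w _ => ?_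
        rw [Finset.sum_comm]
        refine Finset.sum_congr rfl fun v _ => ?_
        rw [← Finset.mul_sum, hgu v w]
      rw [e]
      exact Finset.sum_comm
    rw [step2, step3, step4] at step1
    exact step1
  have hW := csInf_le (planSet_bddBelow x z) hmem
  rw [W1_def x z, W1_def x y, W1_def y z]
  linarith [hW, hcost, hc1, hc2]

lemma W1_path {K : ℝ} (hconn : G.Connected) (hD : 0 < D) (hreg : G.IsRegularOfDegree D)
    (h : ∀ x y : V, G.Adj x y → K ≤ kappa G D x y) :
    ∀ (n : ℕ) (x y : V), G.dist x y = n → W1 G D x y ≤ n * (1 - K * D / (D + 1)) := by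
  intro n
  induction n with
  | zero =>
    intro x y hxy
    have hxy' : x = y := hconn.dist_eq_zero_iff.mp hxy
    subst hxy'
    simpa using W1_self_le x
  | succ n ih =>
    intro x y hxy
    obtain ⟨p, hp⟩ := hconn.exists_walk_length_eq_dist x y
    cases p with
    | nil =>
      rw [hxy] at hp
      simp at hp
    | cons hadj q =>
      rename_i w
      have hq : q.length = n := by
        rw [hxy] at hp
        simpa using hp
      have hxw : G.dist x w = 1 := SimpleGraph.dist_eq_one_iff_adj.mpr hadj
      have hwy : G.dist w y = n := by
        have h1 : G.dist w y ≤ n := hq ▸ SimpleGraph.dist_le q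
        have h2 : G.dist x y ≤ G.dist x w + G.dist w y := hconn.dist_triangle
        omega
      have hedge : W1 G D x w ≤ 1 - K * D / (D + 1) := W1_edge hD (h x w hadj)
      calc W1 G D x y ≤ W1 G D x w + W1 G D w y := W1_triangle hconn hreg x w y
        _ ≤ (1 - K * D / (D + 1)) + n * (1 - K * D / (D + 1)) :=
            add_le_add hedge (ih w y hwy)
        _ = (n + 1 : ℕ) * (1 - K * D / (D + 1)) := by push_cast; ring

end Aux

theorem stmt [Fintype V] (G : SimpleGraph V) (hconn : G.Connected)
    (D : ℕ) (hD : 0 < D) (hreg : G.IsRegularOfDegree D)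
    (K : ℝ) (hK : 0 < K) (h : ∀ x y : V, G.Adj x y → K ≤ kappa G D x y) :
    (G.diam : ℝ) ≤ 2 / K := by
  have hne : Nonempty V := hconn.nonempty
  obtain ⟨u, v, huv⟩ := G.exists_dist_eq_diam
  set n : ℕ := G.dist u v with hn
  have h1 : (n : ℝ) - 2 * D / (D + 1) ≤ W1 G D u v := W1_lower hconn hreg u v
  have h2 : W1 G D u v ≤ (n : ℝ) * (1 - K * D / (D + 1)) :=
    W1_path hconn hD hreg h n u v rfl
  have hDpos : (0 : ℝ) < D := by exact_mod_cast hD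
  have hD1 : (0 : ℝ) < (D : ℝ) + 1 := by linarith
  have hineq : (n : ℝ) * (K * D) / (D + 1) ≤ 2 * D / (D + 1) := by
    have hexp : (n : ℝ) * (1 - K * D / (D + 1)) = (n : ℝ) - (n : ℝ) * (K * D) / (D + 1) := by
      ring
    rw [hexp] at h2
    linarith
  have hKD : (n : ℝ) * (K * D) ≤ 2 * D := by
    exact (div_le_div_iff_of_pos_right hD1).mp hineq
  have hKn : (n : ℝ) * K ≤ 2 := by
    have := le_of_mul_le_mul_right (by linarith [hKD] : ((n : ℝ) * K) * D ≤ 2 * D) hDpos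
    exact this
  rw [← huv]
  rw [le_div_iff₀ hK]
  exact hKn

end BMS
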